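/- Let p > 0, μ > 0, f, g, h, k be reals with f² + g² < 1, and let λ_p, λ_f, λ_g, λ_h, λ_k, λ_L, λ_m, m > 0, c > 0 be reals. If G is not identically zero on (−π, π), then the reduced switching function S has at most 6 zeros in (−π, π). (Hence the averaged minimum-fuel switching function has at most six roots per revolution.) -/

import Mathlib

noncomputable def wfun (f g L : ℝ) : ℝ := 1 + f * Real.cos L + g * Real.sin L

noncomputable def Rfun (p μ lf lg L : ℝ) : ℝ :=
  Real.sqrt (p / μ) * (lf * Real.sin L - lg * Real.cos L)

noncomputable def Tfun (p μ f g lp lf lg L : ℝ) : ℝ :=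
  Real.sqrt (p / μ) * (1 / wfun f g L) *
    (2 * p * lp + lf * ((wfun f g L + 1) * Real.cos L + f)
      + lg * ((wfun f g L + 1) * Real.sin L + g))

noncomputable def Nfun (p μ f g h k lf lg lh lk lL L : ℝ) : ℝ :=
  Real.sqrt (p / μ) * (1 / wfun f g L) *
    ((lL + f * lg - g * lf) * (h * Real.sin L - k * Real.cos L)
      + ((1 + h ^ 2 + k ^ 2) / 2) * (lh * Real.cos L + lk * Real.sin L))

noncomputable def Gfun (p μ f g h k lp lf lg lh lk lL lm m c L : ℝ) : ℝ :=
  c ^ 2 * (Rfun p μ lf lg L ^ 2 + Tfun p μ f g lp lf lg L ^ 2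
    + Nfun p μ f g h k lf lg lh lk lL L ^ 2) - m ^ 2 * (1 - lm) ^ 2

noncomputable def Sfun (p μ f g h k lp lf lg lh lk lL lm m c L : ℝ) : ℝ :=
  1 - lm - (c / m) * Real.sqrt (Rfun p μ lf lg L ^ 2 + Tfun p μ f g lp lf lg L ^ 2
    + Nfun p μ f g h k lf lg lh lk lL L ^ 2)

set_option maxHeartbeats 4000000
set_option linter.unusedVariables false

noncomputable def auxA0 (p μ f g h k lp lf lg lh lk lL lm m c : ℝ) : ℝ :=
  (-1) * μ * m ^ 2 + 2 * μ * lm * m ^ 2 + (-1) * μ * lm ^ 2 * m ^ 2 + (-2) * μ * f * m ^ 2 + 4 * μ * f * lm * m ^ 2 + (-2) * μ * f * lm ^ 2 * m ^ 2 + (-1) * μ * f ^ 2 * m ^ 2 + 2 * μ * f ^ 2 * lm * m ^ 2 + (-1) * μ * f ^ 2 * lm ^ 2 * m ^ 2 + (1/4 : ℝ) * p * lh ^ 2 * c ^ 2 + p * lg ^ 2 * c ^ 2 + 4 * p * lf ^ 2 * c ^ 2 + (-1) * p * k * lh * lL * c ^ 2 + p * k ^ 2 * lL ^ 2 * c ^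 2 + (1/2 : ℝ) * p * k ^ 2 * lh ^ 2 * c ^ 2 + (-1) * p * k ^ 3 * lh * lL * c ^ 2 + (1/4 : ℝ) * p * k ^ 4 * lh ^ 2 * c ^ 2 + (1/2 : ℝ) * p * h ^ 2 * lh ^ 2 * c ^ 2 + (-1) * p * h ^ 2 * k * lh * lL * c ^ 2 + (1/2 : ℝ) * p * h ^ 2 * k ^ 2 * lh ^ 2 * c ^ 2 + (1/4 : ℝ) * p * h ^ 4 * lh ^ 2 * c ^ 2 + 4 * p * g * lf * lg * c ^ 2 + p * g * k * lf * lh * c ^ 2 + (-2) * p * g * k ^ 2 * lf * lL * c ^ 2 + p * g * k ^ 3 * lf * lh * c ^ 2 + p * g * h ^ 2 * k * lf * lh * c ^ 2 + p * g ^ 2 * lg ^ 2 * c ^ 2 + p * g ^ 2 * k ^ 2 * lf ^ 2 * c ^ 2 + 2 * p * f * lg ^ 2 * c ^ 2 + 8 * p * f * lf ^ 2 * c ^ 2 + (-1) * p * f * k * lg * lh * c ^ 2 + 2 * p * f * k ^ 2 * lg * lL * c ^ 2 + (-1) * p * f * k ^ 3 * lg * lh * c ^ 2 + (-1) * p * f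 * h ^ 2 * k * lg * lh * c ^ 2 + 4 * p * f * g * lf * lg * c ^ 2 + (-2) * p * f * g * k ^ 2 * lf * lg * c ^ 2 + p * f ^ 2 * lg ^ 2 * c ^ 2 + 4 * p * f ^ 2 * lf ^ 2 * c ^ 2 + p * f ^ 2 * k ^ 2 * lg ^ 2 * c ^ 2 + 8 * p ^ 2 * lp * lf * c ^ 2 + 4 * p ^ 2 * g * lp * lg * c ^ 2 + 8 * p ^ 2 * f * lp * lf * c ^ 2 + 4 * p ^ 3 * lp ^ 2 * c ^ 2

noncomputable def auxA1 (p μ f g h k lp lf lg lh lk lL lm m c : ℝ) : ℝ :=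
  (-4) * μ * g * m ^ 2 + 8 * μ * g * lm * m ^ 2 + (-4) * μ * g * lm ^ 2 * m ^ 2 + (-4) * μ * f * g * m ^ 2 + 8 * μ * f * g * lm * m ^ 2 + (-4) * μ * f * g * lm ^ 2 * m ^ 2 + p * lh * lk * c ^ 2 + 12 * p * lf * lg * c ^ 2 + (-2) * p * k * lk * lL * c ^ 2 + 2 * p * k ^ 2 * lh * lk * c ^ 2 + (-2) * p * k ^ 3 * lk * lL * c ^ 2 + p * k ^ 4 * lh * lk * c ^ 2 + 2 * p * h * lh * lL * c ^ 2 + (-4) * p * h * k * lL ^ 2 * c ^ 2 + 2 * p * h * k ^ 2 * lh * lL * c ^ 2 + 2 * p * h ^ 2 * lh * lk * c ^ 2 + (-2) * p * h ^ 2 * k * lk * lL * c ^ 2 + 2 * p * h ^ 2 * k ^ 2 * lh * lk * c ^ 2 + 2 * p * h ^ 3 * lh * lL * c ^ 2 + p * h ^ 4 * lh * lk * c ^ 2 + 12 * p * g * lg ^ 2 * c ^ 2 + 8 * p * g * lf ^ 2 * c ^ 2 + 2 * p * g * k * lf * lk * c ^ 2 + 2 * p * g * k ^ 3 * lf * lk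 * c ^ 2 + (-2) * p * g * h * lf * lh * c ^ 2 + 8 * p * g * h * k * lf * lL * c ^ 2 + (-2) * p * g * h * k ^ 2 * lf * lh * c ^ 2 + 2 * p * g * h ^ 2 * k * lf * lk * c ^ 2 + (-2) * p * g * h ^ 3 * lf * lh * c ^ 2 + 4 * p * g ^ 2 * lf * lg * c ^ 2 + (-4) * p * g ^ 2 * h * k * lf ^ 2 * c ^ 2 + 16 * p * f * lf * lg * c ^ 2 + (-2) * p * f * k * lg * lk * c ^ 2 + (-2) * p * f * k ^ 3 * lg * lk * c ^ 2 + 2 * p * f * h * lg * lh * c ^ 2 + (-8) * p * f * h * k * lg * lL * c ^ 2 + 2 * p * f * h * k ^ 2 * lg * lh * c ^ 2 + (-2) * p * f * h ^ 2 * k * lg * lk * c ^ 2 + 2 * p * f * h ^ 3 * lg * lh * c ^ 2 + 8 * p * f * g * lg ^ 2 * c ^ 2 + 8 * p * f * g * lf ^ 2 * c ^ 2 + 8 * p * f * g * h * k * lf * lg * c ^ 2 + 4 * p * f ^ 2 * lf * lg * c ^ 2 + (-4) * p * f ^ 2 * h * k * lg ^ 2 * c ^ 2 + 16 * p ^ 2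 * lp * lg * c ^ 2 + 8 * p ^ 2 * g * lp * lf * c ^ 2 + 8 * p ^ 2 * f * lp * lg * c ^ 2

noncomputable def auxA2 (p μ f g h k lp lf lg lh lk lL lm m c : ℝ) : ℝ :=
  (-3) * μ * m ^ 2 + 6 * μ * lm * m ^ 2 + (-3) * μ * lm ^ 2 * m ^ 2 + (-4) * μ * g ^ 2 * m ^ 2 + 8 * μ * g ^ 2 * lm * m ^ 2 + (-4) * μ * g ^ 2 * lm ^ 2 * m ^ 2 + (-2) * μ * f * m ^ 2 + 4 * μ * f * lm * m ^ 2 + (-2) * μ * f * lm ^ 2 * m ^ 2 + μ * f ^ 2 * m ^ 2 + (-2) * μ * f ^ 2 * lm * m ^ 2 + μ * f ^ 2 * lm ^ 2 * m ^ 2 + p * lk ^ 2 * c ^ 2 + (-1/4 : ℝ) * p * lh ^ 2 * c ^ 2 + 15 * p * lg ^ 2 * c ^ 2 + p * k * lh * lL * c ^ 2 + (-1) * p * k ^ 2 * lL ^ 2 * c ^ 2 + 2 * p * k ^ 2 * lk ^ 2 * c ^ 2 + (-1/2 : ℝ) * p * k ^ 2 * lh ^ 2 * c ^ 2 + p * k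 ^ 3 * lh * lL * c ^ 2 + p * k ^ 4 * lk ^ 2 * c ^ 2 + (-1/4 : ℝ) * p * k ^ 4 * lh ^ 2 * c ^ 2 + 4 * p * h * lk * lL * c ^ 2 + 4 * p * h * k ^ 2 * lk * lL * c ^ 2 + 4 * p * h ^ 2 * lL ^ 2 * c ^ 2 + 2 * p * h ^ 2 * lk ^ 2 * c ^ 2 + (-1/2 : ℝ) * p * h ^ 2 * lh ^ 2 * c ^ 2 + p * h ^ 2 * k * lh * lL * c ^ 2 + 2 * p * h ^ 2 * k ^ 2 * lk ^ 2 * c ^ 2 + (-1/2 : ℝ) * p * h ^ 2 * k ^ 2 * lh ^ 2 * c ^ 2 + 4 * p * h ^ 3 * lk * lL * c ^ 2 + p * h ^ 4 * lk ^ 2 * c ^ 2 + (-1/4 : ℝ) * p * h ^ 4 * lh ^ 2 * c ^ 2 + 20 * p * g * lf * lg * c ^ 2 + (-1) * p * g * k * lf * lh * c ^ 2 + 2 * p * g * k ^ 2 * lf * lL * c ^ 2 + (-1) * p * g * k ^ 3 * lf * lh * c ^ 2 + (-4) * p * g * h * lf * lk * c ^ 2 + (-4) * p * g * h * k ^ 2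 * lf * lk * c ^ 2 + (-8) * p * g * h ^ 2 * lf * lL * c ^ 2 + (-1) * p * g * h ^ 2 * k * lf * lh * c ^ 2 + (-4) * p * g * h ^ 3 * lf * lk * c ^ 2 + 15 * p * g ^ 2 * lg ^ 2 * c ^ 2 + 4 * p * g ^ 2 * lf ^ 2 * c ^ 2 + (-1) * p * g ^ 2 * k ^ 2 * lf ^ 2 * c ^ 2 + 4 * p * g ^ 2 * h ^ 2 * lf ^ 2 * c ^ 2 + 10 * p * f * lg ^ 2 * c ^ 2 + p * f * k * lg * lh * c ^ 2 + (-2) * p * f * k ^ 2 * lg * lL * c ^ 2 + p * f * k ^ 3 * lg * lh * c ^ 2 + 4 * p * f * h * lg * lk * c ^ 2 + 4 * p * f * h * k ^ 2 * lg * lk * c ^ 2 + 8 * p * f * h ^ 2 * lg * lL * c ^ 2 + p * f * h ^ 2 * k * lg * lh * c ^ 2 + 4 * p * f * h ^ 3 * lg * lk * c ^ 2 + 12 * p * f * g * lf * lg * c ^ 2 + 2 * p * f * g * k ^ 2 * lf * lg * c ^ 2 + (-8) * p * f * g * h ^ 2 * lf * lg * c ^ 2 + (-1) * p * f ^ 2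 * lg ^ 2 * c ^ 2 + (-1) * p * f ^ 2 * k ^ 2 * lg ^ 2 * c ^ 2 + 4 * p * f ^ 2 * h ^ 2 * lg ^ 2 * c ^ 2 + 8 * p ^ 2 * lp * lf * c ^ 2 + 28 * p ^ 2 * g * lp * lg * c ^ 2 + 8 * p ^ 2 * f * lp * lf * c ^ 2 + 12 * p ^ 3 * lp ^ 2 * c ^ 2

noncomputable def auxA3 (p μ f g h k lp lf lg lh lk lL lm m c : ℝ) : ℝ :=
  (-8) * μ * g * m ^ 2 + 16 * μ * g * lm * m ^ 2 + (-8) * μ * g * lm ^ 2 * m ^ 2 + 40 * p * g * lg ^ 2 * c ^ 2 + 32 * p ^ 2 * lp * lg * c ^ 2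

noncomputable def auxA4 (p μ f g h k lp lf lg lh lk lL lm m c : ℝ) : ℝ :=
  (-3) * μ * m ^ 2 + 6 * μ * lm * m ^ 2 + (-3) * μ * lm ^ 2 * m ^ 2 + (-4) * μ * g ^ 2 * m ^ 2 + 8 * μ * g ^ 2 * lm * m ^ 2 + (-4) * μ * g ^ 2 * lm ^ 2 * m ^ 2 + 2 * μ * f * m ^ 2 + (-4) * μ * f * lm * m ^ 2 + 2 * μ * f * lm ^ 2 * m ^ 2 + μ * f ^ 2 * m ^ 2 + (-2) * μ * f ^ 2 * lm * m ^ 2 + μ * f ^ 2 * lm ^ 2 * m ^ 2 + p * lk ^ 2 * c ^ 2 + (-1/4 : ℝ) * p * lh ^ 2 * c ^ 2 + 15 * p * lg ^ 2 * c ^ 2 + p * k * lh * lL * c ^ 2 + (-1) * p * k ^ 2 * lL ^ 2 * c ^ 2 + 2 * p * k ^ 2 * lk ^ 2 * c ^ 2 + (-1/2 : ℝ) * p * k ^ 2 * lh ^ 2 * c ^ 2 + p * k ^ 3 * lh * lL * c ^ 2 + p * k ^ 4 * lk ^ 2 * c ^ 2 + (-1/4 : ℝ) * p * k ^ 4 *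 lh ^ 2 * c ^ 2 + 4 * p * h * lk * lL * c ^ 2 + 4 * p * h * k ^ 2 * lk * lL * c ^ 2 + 4 * p * h ^ 2 * lL ^ 2 * c ^ 2 + 2 * p * h ^ 2 * lk ^ 2 * c ^ 2 + (-1/2 : ℝ) * p * h ^ 2 * lh ^ 2 * c ^ 2 + p * h ^ 2 * k * lh * lL * c ^ 2 + 2 * p * h ^ 2 * k ^ 2 * lk ^ 2 * c ^ 2 + (-1/2 : ℝ) * p * h ^ 2 * k ^ 2 * lh ^ 2 * c ^ 2 + 4 * p * h ^ 3 * lk * lL * c ^ 2 + p * h ^ 4 * lk ^ 2 * c ^ 2 + (-1/4 : ℝ) * p * h ^ 4 * lh ^ 2 * c ^ 2 + (-20) * p * g * lf * lg * c ^ 2 + (-1) * p * g * k * lf * lh * c ^ 2 + 2 * p * g * k ^ 2 * lf * lL * c ^ 2 + (-1) * p * g * k ^ 3 * lf * lh * c ^ 2 + (-4) * p * g * h * lf * lk * c ^ 2 + (-4) * p * g * h * k ^ 2 * lf * lk * c ^ 2 + (-8) * p * g * h ^ 2 * lf * lL * c ^ 2 + (-1) * p * g * h ^ 2 * k * lf *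 lh * c ^ 2 + (-4) * p * g * h ^ 3 * lf * lk * c ^ 2 + 15 * p * g ^ 2 * lg ^ 2 * c ^ 2 + 4 * p * g ^ 2 * lf ^ 2 * c ^ 2 + (-1) * p * g ^ 2 * k ^ 2 * lf ^ 2 * c ^ 2 + 4 * p * g ^ 2 * h ^ 2 * lf ^ 2 * c ^ 2 + (-10) * p * f * lg ^ 2 * c ^ 2 + p * f * k * lg * lh * c ^ 2 + (-2) * p * f * k ^ 2 * lg * lL * c ^ 2 + p * f * k ^ 3 * lg * lh * c ^ 2 + 4 * p * f * h * lg * lk * c ^ 2 + 4 * p * f * h * k ^ 2 * lg * lk * c ^ 2 + 8 * p * f * h ^ 2 * lg * lL * c ^ 2 + p * f * h ^ 2 * k * lg * lh * c ^ 2 + 4 * p * f * h ^ 3 * lg * lk * c ^ 2 + 12 * p * f * g * lf * lg * c ^ 2 + 2 * p * f * g * k ^ 2 * lf * lg * c ^ 2 + (-8) * p * f * g * h ^ 2 * lf * lg * c ^ 2 + (-1) * p * f ^ 2 * lg ^ 2 * c ^ 2 + (-1) * p * f ^ 2 * k ^ 2 * lg ^ 2 * c ^ 2 + 4 * p * f ^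 2 * h ^ 2 * lg ^ 2 * c ^ 2 + (-8) * p ^ 2 * lp * lf * c ^ 2 + 28 * p ^ 2 * g * lp * lg * c ^ 2 + 8 * p ^ 2 * f * lp * lf * c ^ 2 + 12 * p ^ 3 * lp ^ 2 * c ^ 2

noncomputable def auxA5 (p μ f g h k lp lf lg lh lk lL lm m c : ℝ) : ℝ :=
  (-4) * μ * g * m ^ 2 + 8 * μ * g * lm * m ^ 2 + (-4) * μ * g * lm ^ 2 * m ^ 2 + 4 * μ * f * g * m ^ 2 + (-8) * μ * f * g * lm * m ^ 2 + 4 * μ * f * g * lm ^ 2 * m ^ 2 + (-1) * p * lh * lk * c ^ 2 + (-12) * p * lf * lg * c ^ 2 + 2 * p * k * lk * lL * c ^ 2 + (-2) * p * k ^ 2 * lh * lk * c ^ 2 + 2 * p * k ^ 3 * lk * lL * c ^ 2 + (-1) * p * k ^ 4 * lh * lk * c ^ 2 + (-2) * p * h * lh * lL * c ^ 2 + 4 * p * h * k * lL ^ 2 * c ^ 2 + (-2) * p * h * k ^ 2 * lh * lL * c ^ 2 + (-2) * p * h ^ 2 * lh * lk * c ^ 2 + 2 * p * h ^ 2 * k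 * lk * lL * c ^ 2 + (-2) * p * h ^ 2 * k ^ 2 * lh * lk * c ^ 2 + (-2) * p * h ^ 3 * lh * lL * c ^ 2 + (-1) * p * h ^ 4 * lh * lk * c ^ 2 + 12 * p * g * lg ^ 2 * c ^ 2 + 8 * p * g * lf ^ 2 * c ^ 2 + (-2) * p * g * k * lf * lk * c ^ 2 + (-2) * p * g * k ^ 3 * lf * lk * c ^ 2 + 2 * p * g * h * lf * lh * c ^ 2 + (-8) * p * g * h * k * lf * lL * c ^ 2 + 2 * p * g * h * k ^ 2 * lf * lh * c ^ 2 + (-2) * p * g * h ^ 2 * k * lf * lk * c ^ 2 + 2 * p * g * h ^ 3 * lf * lh * c ^ 2 + (-4) * p * g ^ 2 * lf * lg * c ^ 2 + 4 * p * g ^ 2 * h * k * lf ^ 2 * c ^ 2 + 16 * p * f * lf * lg * c ^ 2 + 2 * p * f * k * lg * lk * c ^ 2 + 2 * p * f * k ^ 3 * lg * lk * c ^ 2 + (-2) * p * f * h * lg * lh * c ^ 2 + 8 * p * f * h * k * lg * lL * c ^ 2 + (-2) * p * f * h * k ^ 2 * lg * lh * c ^ 2 + 2 * p * f * h ^ 2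 * k * lg * lk * c ^ 2 + (-2) * p * f * h ^ 3 * lg * lh * c ^ 2 + (-8) * p * f * g * lg ^ 2 * c ^ 2 + (-8) * p * f * g * lf ^ 2 * c ^ 2 + (-8) * p * f * g * h * k * lf * lg * c ^ 2 + (-4) * p * f ^ 2 * lf * lg * c ^ 2 + 4 * p * f ^ 2 * h * k * lg ^ 2 * c ^ 2 + 16 * p ^ 2 * lp * lg * c ^ 2 + (-8) * p ^ 2 * g * lp * lf * c ^ 2 + (-8) * p ^ 2 * f * lp * lg * c ^ 2

noncomputable def auxA6 (p μ f g h k lp lf lg lh lk lL lm m c : ℝ) : ℝ :=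
  (-1) * μ * m ^ 2 + 2 * μ * lm * m ^ 2 + (-1) * μ * lm ^ 2 * m ^ 2 + 2 * μ * f * m ^ 2 + (-4) * μ * f * lm * m ^ 2 + 2 * μ * f * lm ^ 2 * m ^ 2 + (-1) * μ * f ^ 2 * m ^ 2 + 2 * μ * f ^ 2 * lm * m ^ 2 + (-1) * μ * f ^ 2 * lm ^ 2 * m ^ 2 + (1/4 : ℝ) * p * lh ^ 2 * c ^ 2 + p * lg ^ 2 * c ^ 2 + 4 * p * lf ^ 2 * c ^ 2 + (-1) * p * k * lh * lL * c ^ 2 + p * k ^ 2 * lL ^ 2 * c ^ 2 + (1/2 : ℝ) * p * k ^ 2 * lh ^ 2 * c ^ 2 + (-1) * p * k ^ 3 * lh * lL * c ^ 2 + (1/4 : ℝ) * p * k ^ 4 * lh ^ 2 * c ^ 2 + (1/2 : ℝ) * p * h ^ 2 * lh ^ 2 * c ^ 2 + (-1) * p * h ^ 2 * k * lh * lL * c ^ 2 + (1/2 : ℝ) * p * h ^ 2 * k ^ 2 * lh ^ 2 * c ^ 2 + (1/4 : ℝ) * p * h ^ 4 * lh ^ 2 * c ^ 2 + (-4) * p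 * g * lf * lg * c ^ 2 + p * g * k * lf * lh * c ^ 2 + (-2) * p * g * k ^ 2 * lf * lL * c ^ 2 + p * g * k ^ 3 * lf * lh * c ^ 2 + p * g * h ^ 2 * k * lf * lh * c ^ 2 + p * g ^ 2 * lg ^ 2 * c ^ 2 + p * g ^ 2 * k ^ 2 * lf ^ 2 * c ^ 2 + (-2) * p * f * lg ^ 2 * c ^ 2 + (-8) * p * f * lf ^ 2 * c ^ 2 + (-1) * p * f * k * lg * lh * c ^ 2 + 2 * p * f * k ^ 2 * lg * lL * c ^ 2 + (-1) * p * f * k ^ 3 * lg * lh * c ^ 2 + (-1) * p * f * h ^ 2 * k * lg * lh * c ^ 2 + 4 * p * f * g * lf * lg * c ^ 2 + (-2) * p * f * g * k ^ 2 * lf * lg * c ^ 2 + p * f ^ 2 * lg ^ 2 * c ^ 2 + 4 * p * f ^ 2 * lf ^ 2 * c ^ 2 + p * f ^ 2 * k ^ 2 * lg ^ 2 * c ^ 2 + (-8) * p ^ 2 * lp * lf * c ^ 2 + 4 * p ^ 2 * g * lp * lg * c ^ 2 + 8 * p ^ 2 * f * lp * lf * c ^ 2 + 4 * p ^ 3 *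 lp ^ 2 * c ^ 2


open Polynomial in
noncomputable def auxP (p μ f g h k lp lf lg lh lk lL lm m c : ℝ) : Polynomial ℝ :=
  C (auxA0 p μ f g h k lp lf lg lh lk lL lm m c) + C (auxA1 p μ f g h k lp lf lg lh lk lL lm m c) * X + C (auxA2 p μ f g h k lp lf lg lh lk lL lm m c) * X ^ 2 + C (auxA3 p μ f g h k lp lf lg lh lk lL lm m c) * X ^ 3
    + C (auxA4 p μ f g h k lp lf lg lh lk lL lm m c) * X ^ 4 + C (auxA5 p μ f g h k lp lf lg lh lk lL lm m c) * X ^ 5 + C (auxA6 p μ f g h k lp lf lg lh lk lL lm m c) * X ^ 6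

lemma auxP_natDegree_le (p μ f g h k lp lf lg lh lk lL lm m c : ℝ) :
    (auxP p μ f g h k lp lf lg lh lk lL lm m c).natDegree ≤ 6 := by
  unfold auxP
  compute_degree

lemma wfun_pos (f g : ℝ) (hfg : f ^ 2 + g ^ 2 < 1) (L : ℝ) : 0 < wfun f g L := by
  have h1 := Real.sin_sq_add_cos_sq L
  have h2 := sq_nonneg (f * Real.sin L - g * Real.cos L)
  have h3 := sq_nonneg (1 + f * Real.cos L + g * Real.sin L)
  unfold wfun; nlinarith

lemma coshalf (x : ℝ) (hc : Real.cos x ≠ 0) :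
    Real.cos (2 * x) = (1 - Real.tan x ^ 2) / (1 + Real.tan x ^ 2) := by
  have h1 := Real.sin_sq_add_cos_sq x
  rw [Real.cos_two_mul, Real.tan_eq_sin_div_cos]
  rw [eq_div_iff (by positivity : (0:ℝ) < 1 + (Real.sin x / Real.cos x) ^ 2).ne']
  field_simp
  linear_combination (2 * Real.cos x ^ 2) * h1

lemma sinhalf (x : ℝ) (hc : Real.cos x ≠ 0) :
    Real.sin (2 * x) = 2 * Real.tan x / (1 + Real.tan x ^ 2) := by
  have h1 := Real.sin_sq_add_cos_sq x
  rw [Real.sin_two_mul, Real.tan_eq_sin_div_cos]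
  rw [eq_div_iff (by positivity : (0:ℝ) < 1 + (Real.sin x / Real.cos x) ^ 2).ne']
  field_simp
  linear_combination (Real.sin x) * h1

lemma auxIDE (p μ f g h k lp lf lg lh lk lL lm m c t : ℝ) :
    (auxP p μ f g h k lp lf lg lh lk lL lm m c).eval t * (1 + t ^ 2) =
      c ^ 2 * p * ((2 * lf * t - lg * (1 - t ^ 2)) ^ 2
            * ((1 + f) + 2 * g * t + (1 - f) * t ^ 2) ^ 2
          + (2 * p * lp * (1 + t ^ 2) ^ 2
             + lf * ((((1 + f) + 2 * g * t + (1 - f) * t ^ 2) + (1 + t ^ 2)) * (1 - t ^ 2)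
                + f * (1 + t ^ 2) ^ 2)
             + lg * ((((1 + f) + 2 * g * t + (1 - f) * t ^ 2) + (1 + t ^ 2)) * (2 * t)
                + g * (1 + t ^ 2) ^ 2)) ^ 2)
      + (1 + t ^ 2) ^ 2 * (c ^ 2 * p *
            ((lL + f * lg - g * lf) * (2 * h * t - k * (1 - t ^ 2))
              + ((1 + h ^ 2 + k ^ 2) / 2) * (lh * (1 - t ^ 2) + 2 * lk * t)) ^ 2
          - μ * m ^ 2 * (1 - lm) ^ 2 * ((1 + f) + 2 * g * t + (1 - f) * t ^ 2) ^ 2) := by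
  simp only [auxP, auxA0, auxA1, auxA2, auxA3, auxA4, auxA5, auxA6,
    Polynomial.eval_add, Polynomial.eval_mul, Polynomial.eval_pow,
    Polynomial.eval_C, Polynomial.eval_X]
  ring

lemma stepB (p μ f g h k lp lf lg lh lk lL lm m c : ℝ)
    (hp : 0 < p) (hμ : 0 < μ) (hfg : f ^ 2 + g ^ 2 < 1) (L t : ℝ) :
    μ * (1 + t ^ 2) ^ 4 * (wfun f g L) ^ 2 * Gfun p μ f g h k lp lf lg lh lk lL lm m c L =
      c ^ 2 * p * (((1 + t ^ 2) * (lf * Real.sin L - lg * Real.cos L)) ^ 2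
            * ((1 + t ^ 2) * wfun f g L) ^ 2
          + ((1 + t ^ 2) ^ 2 * (2 * p * lp + lf * ((wfun f g L + 1) * Real.cos L + f)
              + lg * ((wfun f g L + 1) * Real.sin L + g))) ^ 2)
      + (1 + t ^ 2) ^ 2 * (c ^ 2 * p *
            ((1 + t ^ 2) * ((lL + f * lg - g * lf) * (h * Real.sin L - k * Real.cos L)
              + ((1 + h ^ 2 + k ^ 2) / 2) * (lh * Real.cos L + lk * Real.sin L))) ^ 2
          - μ * m ^ 2 * (1 - lm) ^ 2 * ((1 + t ^ 2) * wfun f g L) ^ 2) := by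
  have hw := (wfun_pos f g hfg L).ne'
  have hsq : Real.sqrt (p / μ) ^ 2 = p / μ := Real.sq_sqrt (div_nonneg hp.le hμ.le)
  simp only [Gfun, Rfun, Tfun, Nfun, mul_pow, hsq]
  field_simp
  ring

lemma key_identity (p μ f g h k lp lf lg lh lk lL lm m c : ℝ)
    (hp : 0 < p) (hμ : 0 < μ) (hfg : f ^ 2 + g ^ 2 < 1)
    (L : ℝ) (hc : Real.cos (L / 2) ≠ 0) :
    (auxP p μ f g h k lp lf lg lh lk lL lm m c).eval (Real.tan (L / 2)) * (1 + Real.tan (L / 2) ^ 2) =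
      μ * (1 + Real.tan (L / 2) ^ 2) ^ 4 * (wfun f g L) ^ 2 * Gfun p μ f g h k lp lf lg lh lk lL lm m c L := by
  have hL : L = 2 * (L / 2) := by ring
  have hcosL : Real.cos L = (1 - Real.tan (L / 2) ^ 2) / (1 + Real.tan (L / 2) ^ 2) := by
    have hh := coshalf (L / 2) hc; rw [← hL] at hh; exact hh
  have hsinL : Real.sin L = 2 * Real.tan (L / 2) / (1 + Real.tan (L / 2) ^ 2) := by
    have hh := sinhalf (L / 2) hc; rw [← hL] at hh; exact hh
  have ht1 : (0:ℝ) < 1 + Real.tan (L / 2) ^ 2 := by positivity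
  set t := Real.tan (L / 2) with hT
  have hW : (1 + t ^ 2) * wfun f g L = (1 + f) + 2 * g * t + (1 - f) * t ^ 2 := by
    unfold wfun; rw [hcosL, hsinL]; field_simp; ring
  have hU : (1 + t ^ 2) * (lf * Real.sin L - lg * Real.cos L)
      = 2 * lf * t - lg * (1 - t ^ 2) := by
    rw [hcosL, hsinL]; field_simp
  have hV : (1 + t ^ 2) ^ 2 * (2 * p * lp + lf * ((wfun f g L + 1) * Real.cos L + f)
        + lg * ((wfun f g L + 1) * Real.sin L + g))
      = 2 * p * lp * (1 + t ^ 2) ^ 2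
        + lf * ((((1 + f) + 2 * g * t + (1 - f) * t ^ 2) + (1 + t ^ 2)) * (1 - t ^ 2)
            + f * (1 + t ^ 2) ^ 2)
        + lg * ((((1 + f) + 2 * g * t + (1 - f) * t ^ 2) + (1 + t ^ 2)) * (2 * t)
            + g * (1 + t ^ 2) ^ 2) := by
    unfold wfun; rw [hcosL, hsinL]; field_simp; ring
  have hY : (1 + t ^ 2) * ((lL + f * lg - g * lf) * (h * Real.sin L - k * Real.cos L)
        + ((1 + h ^ 2 + k ^ 2) / 2) * (lh * Real.cos L + lk * Real.sin L))
      = (lL + f * lg - g * lf) * (2 * h * t - k * (1 - t ^ 2))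
        + ((1 + h ^ 2 + k ^ 2) / 2) * (lh * (1 - t ^ 2) + 2 * lk * t) := by
    rw [hcosL, hsinL]; field_simp
  rw [stepB p μ f g h k lp lf lg lh lk lL lm m c hp hμ hfg L t, hU, hW, hV, hY]
  exact auxIDE p μ f g h k lp lf lg lh lk lL lm m c t


/-- If `G` is not identically zero on `(-π, π)`, then the reduced
switching function `S` has at most 6 zeros in `(-π, π)`: the averaged
minimum-fuel switching function has at most six roots per revolution. -/
theorem switching_function_at_most_six_zeros
    (p μ f g h k lp lf lg lh lk lL lm m c : ℝ)
    (hp : 0 < p) (hμ : 0 < μ) (hfg : f ^ 2 + g ^ 2 < 1) (hm : 0 < m) (hc : 0 < c)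
    (hG : ∃ L ∈ Set.Ioo (-Real.pi) Real.pi,
      Gfun p μ f g h k lp lf lg lh lk lL lm m c L ≠ 0) :
    {L ∈ Set.Ioo (-Real.pi) Real.pi |
        Sfun p μ f g h k lp lf lg lh lk lL lm m c L = 0}.Finite ∧
    {L ∈ Set.Ioo (-Real.pi) Real.pi |
        Sfun p μ f g h k lp lf lg lh lk lL lm m c L = 0}.ncard ≤ 6 := by
  have hcoshalf : ∀ L ∈ Set.Ioo (-Real.pi) Real.pi, Real.cos (L / 2) ≠ 0 := by
    intro L hL
    have hmem : L / 2 ∈ Set.Ioo (-(Real.pi / 2)) (Real.pi / 2) :=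
      ⟨by linarith [hL.1], by linarith [hL.2]⟩
    exact (Real.cos_pos_of_mem_Ioo hmem).ne'
  obtain ⟨L0, hL0mem, hG0⟩ := hG
  set P := auxP p μ f g h k lp lf lg lh lk lL lm m c with hPdef
  have hP0 : P ≠ 0 := by
    intro hP
    have hid := key_identity p μ f g h k lp lf lg lh lk lL lm m c hp hμ hfg L0 (hcoshalf L0 hL0mem)
    rw [← hPdef, hP] at hid
    simp only [Polynomial.eval_zero, zero_mul] at hid
    have hA : μ * (1 + Real.tan (L0 / 2) ^ 2) ^ 4 * (wfun f g L0) ^ 2 ≠ 0 := by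
      have := wfun_pos f g hfg L0
      positivity
    exact hG0 ((mul_eq_zero.mp hid.symm).resolve_left hA)
  have hroot : ∀ L ∈ {L ∈ Set.Ioo (-Real.pi) Real.pi |
      Sfun p μ f g h k lp lf lg lh lk lL lm m c L = 0}, P.IsRoot (Real.tan (L / 2)) := by
    intro L hLZ
    obtain ⟨hLmem, hS⟩ := hLZ
    have hQnn : (0:ℝ) ≤ Rfun p μ lf lg L ^ 2 + Tfun p μ f g lp lf lg L ^ 2
        + Nfun p μ f g h k lf lg lh lk lL L ^ 2 := by positivity
    have hGz : Gfun p μ f g h k lp lf lg lh lk lL lm m c L = 0 := by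
      unfold Sfun at hS
      have h1 : (c / m) * Real.sqrt (Rfun p μ lf lg L ^ 2 + Tfun p μ f g lp lf lg L ^ 2
          + Nfun p μ f g h k lf lg lh lk lL L ^ 2) = 1 - lm := by linarith
      have h2 : ((c / m) * Real.sqrt (Rfun p μ lf lg L ^ 2 + Tfun p μ f g lp lf lg L ^ 2
          + Nfun p μ f g h k lf lg lh lk lL L ^ 2)) ^ 2 = (1 - lm) ^ 2 := by rw [h1]
      rw [mul_pow, Real.sq_sqrt hQnn] at h2
      unfold Gfun
      have hm' : m ≠ 0 := hm.ne'
      field_simp at h2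
      linear_combination h2
    have hid := key_identity p μ f g h k lp lf lg lh lk lL lm m c hp hμ hfg L (hcoshalf L hLmem)
    rw [hGz, mul_zero, ← hPdef] at hid
    have ht : (1 + Real.tan (L / 2) ^ 2) ≠ 0 := by positivity
    exact (mul_eq_zero.mp hid).resolve_right ht
  have hinj : Set.InjOn (fun L => Real.tan (L / 2)) {L ∈ Set.Ioo (-Real.pi) Real.pi |
      Sfun p μ f g h k lp lf lg lh lk lL lm m c L = 0} := by
    intro x hx y hy hxy
    have hx2 : x / 2 ∈ Set.Ioo (-(Real.pi / 2)) (Real.pi / 2) :=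
      ⟨by linarith [hx.1.1], by linarith [hx.1.2]⟩
    have hy2 : y / 2 ∈ Set.Ioo (-(Real.pi / 2)) (Real.pi / 2) :=
      ⟨by linarith [hy.1.1], by linarith [hy.1.2]⟩
    have := Real.injOn_tan hx2 hy2 hxy
    linarith
  have himg : (fun L => Real.tan (L / 2)) '' {L ∈ Set.Ioo (-Real.pi) Real.pi |
      Sfun p μ f g h k lp lf lg lh lk lL lm m c L = 0} ⊆ ↑P.roots.toFinset := by
    rintro x ⟨L, hL, rfl⟩
    simp only [Finset.coe_sort_coe, Multiset.mem_toFinset, Finset.mem_coe]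
    rw [Polynomial.mem_roots hP0]
    exact hroot L hL
  have hfin : {L ∈ Set.Ioo (-Real.pi) Real.pi |
      Sfun p μ f g h k lp lf lg lh lk lL lm m c L = 0}.Finite :=
    Set.Finite.of_finite_image (Set.Finite.subset (P.roots.toFinset.finite_toSet) himg) hinj
  refine ⟨hfin, ?_⟩
  calc {L ∈ Set.Ioo (-Real.pi) Real.pi |
        Sfun p μ f g h k lp lf lg lh lk lL lm m c L = 0}.ncard
      = ((fun L => Real.tan (L / 2)) '' {L ∈ Set.Ioo (-Real.pi) Real.pi |
          Sfun p μ f g h k lp lf lg lh lk lL lm m c L = 0}).ncard :=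
        (Set.ncard_image_of_injOn hinj).symm
    _ ≤ (↑P.roots.toFinset : Set ℝ).ncard :=
        Set.ncard_le_ncard himg (P.roots.toFinset.finite_toSet)
    _ = P.roots.toFinset.card := Set.ncard_coe_finset _
    _ ≤ Multiset.card P.roots := Multiset.toFinset_card_le _
    _ ≤ P.natDegree := Polynomial.card_roots' P
    _ ≤ 6 := auxP_natDegree_le p μ f g h k lp lf lg lh lk lL lm m c
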